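/- arXiv:2302.00982 — 2 statements merged into one kernel-verified Lean document; each statement's English description precedes it below -/
import Mathlib

section
/- For every y ∈ 𝒴, the function θ ↦ h_ε(θ,y) is Fréchet differentiable at every θ ∈ ℓ̄₁(Λ). Its Fréchet derivative is the bounded linear functional on ℓ̄₁(Λ) given by D_θh_ε(θ,y)[τ] = Σ_{λ∈Λ} conj(g_λ(θ,y)) τ_λ, where g_λ(θ,y) = ∫_𝒳 conj(φ_λ(x)) F_{θ,y}(x) dμ(x), and its operator norm satisfies ‖D_θh_ε(θ,y)‖_op = sup_{‖τ‖_{ℓ1} ≤ 1} |D_θh_ε(θ,y)[τ]| ≤ sup_{λ∈Λ} |g_λ(θ,y)| ≤ 1. -/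
open MeasureTheory Complex Filter Topology

set_option maxHeartbeats 1000000

noncomputable section

/-- Frequencies: `Λ = ℤ^d \ {0}`. -/
abbrev Lam (d : ℕ) := {v : Fin d → ℤ // v ≠ 0}

/-- Negation on `Λ`. -/
def negL {d : ℕ} (l : Lam d) : Lam d := ⟨-l.1, by simpa using l.2⟩

/-- Fourier character `φ_λ(x) = exp(2πi⟨λ,x⟩)`. -/
def phiF {d : ℕ} (l : Lam d) (x : Fin d → ℝ) : ℂ :=
  Complex.exp (2 * (Real.pi : ℂ) * Complex.I * (∑ i, (l.1 i : ℂ) * (x i : ℂ)))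

/-- The real Banach space `ℓ̄₁(Λ)` of complex summable sequences with
`θ_{-λ} = conj (θ_λ)`, as a real submodule of `ℓ¹(Λ; ℂ)`. -/
def SymmL1 (d : ℕ) : Submodule ℝ (lp (fun _ : Lam d => ℂ) 1) where
  carrier := {θ | ∀ l, θ (negL l) = starRingEnd ℂ (θ l)}
  add_mem' := by
    intro a b ha hb l
    simp only [lp.coeFn_add, Pi.add_apply, map_add, ha l, hb l]
  zero_mem' := by
    intro l
    simp [lp.coeFn_zero]
  smul_mem' := by
    intro r a ha l
    simp only [lp.coeFn_smul, Pi.smul_apply, ha l, Complex.real_smul, map_mul,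
      Complex.conj_ofReal]

instance (d : ℕ) : NormedAddCommGroup (SymmL1 d) := inferInstance

instance (d : ℕ) : NormedSpace ℝ (SymmL1 d) := inferInstance

/-- The `λ`-th coefficient of an element of `ℓ̄₁(Λ)`. -/
def coeffL {d : ℕ} (θ : SymmL1 d) (l : Lam d) : ℂ := (θ : lp (fun _ : Lam d => ℂ) 1) l

/-- The unit cube `𝒳 = [0,1]^d`. -/
def cube (d : ℕ) : Set (Fin d → ℝ) := Set.Icc 0 1

/-- The uniform probability measure on the unit cube. -/
def muU (d : ℕ) : Measure (Fin d → ℝ) := volume.restrict (cube d)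

/-- `u_θ(x) = Σ_λ θ_λ φ_λ(x)` (a real number thanks to the symmetry of `θ`). -/
def uFun {d : ℕ} (θ : SymmL1 d) (x : Fin d → ℝ) : ℝ :=
  (∑' l : Lam d, coeffL θ l * phiF l x).re

/-- `h_ε(θ, y)`. -/
def hEps {d : ℕ} (ε : ℝ) (c : (Fin d → ℝ) → (Fin d → ℝ) → ℝ)
    (θ : SymmL1 d) (y : Fin d → ℝ) : ℝ :=
  ε * Real.log (∫ x, Real.exp ((uFun θ x - c x y) / ε) ∂muU d) + ε

/-- `H_ε(θ) = ∫ h_ε(θ, y) dν(y)`. -/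
def HEps {d : ℕ} (ε : ℝ) (c : (Fin d → ℝ) → (Fin d → ℝ) → ℝ)
    (ν : Measure (Fin d → ℝ)) (θ : SymmL1 d) : ℝ :=
  ∫ y, hEps ε c θ y ∂ν

/-- The probability density `F_{θ,y}`. -/
def Fdens {d : ℕ} (ε : ℝ) (c : (Fin d → ℝ) → (Fin d → ℝ) → ℝ)
    (θ : SymmL1 d) (y : Fin d → ℝ) (x : Fin d → ℝ) : ℝ :=
  Real.exp ((uFun θ x - c x y) / ε) /
    ∫ x', Real.exp ((uFun θ x' - c x' y) / ε) ∂muU d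

/-- `g_λ(θ,y) = ∫ conj(φ_λ) F_{θ,y} dμ`, the `λ`-th partial derivative of `h_ε(·,y)`. -/
def gradC {d : ℕ} (ε : ℝ) (c : (Fin d → ℝ) → (Fin d → ℝ) → ℝ)
    (θ : SymmL1 d) (y : Fin d → ℝ) (l : Lam d) : ℂ :=
  ∫ x, starRingEnd ℂ (phiF l x) * (Fdens ε c θ y x : ℂ) ∂muU d


section Aux

variable {d : ℕ}

lemma abs_phiF (l : Lam d) (x : Fin d → ℝ) : ‖phiF l x‖ = 1 := by
  unfold phiF
  have h : (∑ i, (l.1 i : ℂ) * (x i : ℂ)) = ((∑ i, (l.1 i : ℝ) * x i : ℝ) : ℂ) := by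
    push_cast; ring
  rw [h, Complex.norm_exp]
  have : (2 * (Real.pi : ℂ) * Complex.I * ((∑ i, (l.1 i : ℝ) * x i : ℝ) : ℂ)).re = 0 := by
    simp [Complex.mul_re, Complex.mul_im]
  rw [this, Real.exp_zero]

lemma continuous_phiF (l : Lam d) : Continuous (phiF l) := by
  unfold phiF
  exact Complex.continuous_exp.comp <| continuous_const.mul <|
    continuous_finset_sum _ fun i _ =>
      continuous_const.mul (Complex.continuous_ofReal.comp (continuous_apply i))

lemma summable_coeff (θ : SymmL1 d) : Summable (fun l => ‖coeffL θ l‖) := by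
  have := (lp.memℓp (θ : lp (fun _ : Lam d => ℂ) 1)).summable (by norm_num)
  simpa [coeffL] using this

lemma tsum_coeff_norm (θ : SymmL1 d) : ∑' l, ‖coeffL θ l‖ = ‖θ‖ := by
  have h := lp.norm_eq_tsum_rpow (p := 1) (by norm_num) (θ : lp (fun _ : Lam d => ℂ) 1)
  simp only [ENNReal.toReal_one, Real.rpow_one] at h
  rw [show ‖θ‖ = ‖(θ : lp (fun _ : Lam d => ℂ) 1)‖ from rfl, h]
  norm_num
  rfl

lemma summable_term (θ : SymmL1 d) (x : Fin d → ℝ) :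
    Summable (fun l => coeffL θ l * phiF l x) := by
  apply Summable.of_norm
  have : (fun l : Lam d => ‖coeffL θ l * phiF l x‖) = fun l => ‖coeffL θ l‖ := by
    funext l
    rw [norm_mul]
    simp [abs_phiF]
  rw [this]
  exact summable_coeff θ

lemma abs_uFun_le (θ : SymmL1 d) (x : Fin d → ℝ) : |uFun θ x| ≤ ‖θ‖ := by
  have h1 : |uFun θ x| ≤ ‖∑' l : Lam d, coeffL θ l * phiF l x‖ := by
    exact Complex.abs_re_le_norm _
  refine h1.trans ?_
  refine (norm_tsum_le_tsum_norm ?_).trans ?_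
  · have : (fun l : Lam d => ‖coeffL θ l * phiF l x‖) = fun l => ‖coeffL θ l‖ := by
      funext l; rw [norm_mul]; simp [abs_phiF]
    rw [this]; exact summable_coeff θ
  · have : (fun l : Lam d => ‖coeffL θ l * phiF l x‖) = fun l => ‖coeffL θ l‖ := by
      funext l; rw [norm_mul]; simp [abs_phiF]
    rw [this, tsum_coeff_norm]

lemma coeffL_add (θ τ : SymmL1 d) (l : Lam d) :
    coeffL (θ + τ) l = coeffL θ l + coeffL τ l := by
  simp [coeffL, lp.coeFn_add, Pi.add_apply]

lemma coeffL_smul (r : ℝ) (θ : SymmL1 d) (l : Lam d) :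
    coeffL (r • θ) l = (r : ℂ) * coeffL θ l := by
  simp [coeffL, lp.coeFn_smul, Pi.smul_apply, Complex.real_smul]

lemma uFun_add (θ τ : SymmL1 d) (x : Fin d → ℝ) :
    uFun (θ + τ) x = uFun θ x + uFun τ x := by
  unfold uFun
  rw [← Complex.add_re]
  congr 1
  rw [← Summable.tsum_add (summable_term θ x) (summable_term τ x)]
  exact tsum_congr fun l => by rw [coeffL_add]; ring

lemma uFun_smul (r : ℝ) (θ : SymmL1 d) (x : Fin d → ℝ) :
    uFun (r • θ) x = r * uFun θ x := by
  unfold uFun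
  rw [← Complex.re_ofReal_mul]
  congr 1
  rw [← tsum_mul_left]
  exact tsum_congr fun l => by rw [coeffL_smul]; ring

lemma continuous_uFun (θ : SymmL1 d) : Continuous (uFun θ) := by
  unfold uFun
  refine Complex.continuous_re.comp ?_
  refine continuous_tsum (fun l => ?_) (summable_coeff θ) (fun l x => ?_)
  · exact continuous_const.mul (continuous_phiF l)
  · rw [norm_mul]; simp [abs_phiF]

instance : IsProbabilityMeasure (muU d) := by
  constructor
  rw [muU, Measure.restrict_apply_univ, cube, Real.volume_Icc_pi]
  simp

end Aux

section Aux2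

variable {d : ℕ}

lemma lsc_slice {α β : Type*} [TopologicalSpace α] [TopologicalSpace β]
    {f : α × β → ℝ} {s : Set α} {t : Set β}
    (h : LowerSemicontinuousOn f (s ×ˢ t)) {y : β} (hy : y ∈ t) :
    LowerSemicontinuousOn (fun x => f (x, y)) s := by
  intro x hx b hb
  have h2 := h (x, y) ⟨hx, hy⟩ b hb
  have hcont : Tendsto (fun x' : α => (x', y)) (𝓝[s] x) (𝓝[s ×ˢ t] (x, y)) := by
    apply ContinuousWithinAt.tendsto_nhdsWithin
    · exact (Continuous.prodMk_left y).continuousWithinAt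
    · intro x' hx'
      exact ⟨hx', hy⟩
  exact hcont.eventually h2

lemma zero_mem_cube : (0 : Fin d → ℝ) ∈ cube d := Set.mem_Icc.2 ⟨le_refl _, zero_le_one⟩

lemma lsc_bddBelow {f : (Fin d → ℝ) → ℝ} (hf : LowerSemicontinuousOn f (cube d)) :
    ∃ B, ∀ x ∈ cube d, B ≤ f x := by
  have hcomp : IsCompact (cube d) := isCompact_Icc
  have key : ∀ x ∈ cube d, ∃ U ∈ 𝓝 x, ∀ x' ∈ U, x' ∈ cube d → f x - 1 < f x' := by
    intro x hx
    have h2 := hf x hx (f x - 1) (by linarith)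
    rw [eventually_nhdsWithin_iff] at h2
    obtain ⟨U, hU, hU2⟩ := Filter.eventually_iff_exists_mem.1 h2
    exact ⟨U, hU, fun x' h1 h2' => hU2 x' h1 h2'⟩
  choose! U hU hU2 using key
  obtain ⟨t, ht⟩ := hcomp.elim_nhds_subcover' (fun x hx => U x) (fun x hx => hU x hx)
  have htne : t.Nonempty := by
    by_contra hte
    rw [Finset.not_nonempty_iff_eq_empty] at hte
    have := ht zero_mem_cube
    simp [hte] at this
  refine ⟨t.inf' htne (fun x => f x.1 - 1), fun x' hx' => ?_⟩
  have := ht hx'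
  simp only [Set.mem_iUnion] at this
  obtain ⟨x, hx, hx'U⟩ := this
  have h3 : f x.1 - 1 < f x' := hU2 x.1 x.2 x' hx'U hx'
  have h4 : t.inf' htne (fun x => f x.1 - 1) ≤ f x.1 - 1 := Finset.inf'_le _ hx
  linarith

lemma lsc_aemeasurable {f : (Fin d → ℝ) → ℝ} (hf : LowerSemicontinuousOn f (cube d)) :
    AEMeasurable f (muU d) := by
  have hcube : MeasurableSet (cube d) := measurableSet_Icc
  have rel : ∀ a : ℝ, ∃ u, IsOpen u ∧ {x | x ∈ cube d ∧ a < f x} = cube d ∩ u := by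
    intro a
    have key : ∀ x, x ∈ cube d ∧ a < f x →
        ∃ v ∈ 𝓝 x, ∀ x' ∈ v, x' ∈ cube d → a < f x' := by
      rintro x ⟨hx, hfx⟩
      have h2 := hf x hx a hfx
      rw [eventually_nhdsWithin_iff] at h2
      obtain ⟨v, hv, hv2⟩ := Filter.eventually_iff_exists_mem.1 h2
      exact ⟨v, hv, fun x' h1 h2' => hv2 x' h1 h2'⟩
    choose! v hv hv2 using key
    refine ⟨⋃ x ∈ {x | x ∈ cube d ∧ a < f x}, interior (v x),
      isOpen_iUnion fun x => isOpen_iUnion fun _ => isOpen_interior, ?_⟩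
    ext z
    constructor
    · intro hz
      exact ⟨hz.1, Set.mem_biUnion hz (mem_interior_iff_mem_nhds.2 (hv z hz))⟩
    · rintro ⟨hzc, hzU⟩
      simp only [Set.mem_iUnion] at hzU
      obtain ⟨x, hx, hzint⟩ := hzU
      exact ⟨hzc, hv2 x hx z (interior_subset hzint) hzc⟩
  have hmeas : Measurable (Set.indicator (cube d) f) := by
    apply measurable_of_Ioi
    intro a
    obtain ⟨u, hu, heq⟩ := rel a
    have hset : Set.indicator (cube d) f ⁻¹' Set.Ioi a =
        (cube d ∩ u) ∪ (if a < 0 then (cube d)ᶜ else ∅) := by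
      ext x
      rw [Set.mem_preimage, Set.mem_Ioi]
      by_cases hx : x ∈ cube d
      · rw [Set.indicator_of_mem hx]
        constructor
        · intro hxp
          left
          rw [← heq]
          exact ⟨hx, hxp⟩
        · intro hxp
          rcases hxp with h1 | h1
          · rw [← heq] at h1
            exact h1.2
          · split_ifs at h1 with h2
            · exact absurd hx h1
            · exact absurd h1 (Set.notMem_empty x)
      · rw [Set.indicator_of_notMem hx]
        constructor
        · intro hxp
          right
          simp [hxp, hx]
        · intro hxp
          rcases hxp with h1 | h1
          · exact absurd h1.1 hx
          · split_ifs at h1 with h2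
            · exact h2
            · exact absurd h1 (Set.notMem_empty x)
    rw [hset]
    refine (hcube.inter hu.measurableSet).union ?_
    split_ifs
    · exact hcube.compl
    · exact MeasurableSet.empty
  rw [muU, ← aemeasurable_indicator_iff hcube]
  exact hmeas.aemeasurable

end Aux2

section Aux3

variable {d : ℕ} {ε : ℝ} {m : (Fin d → ℝ) → ℝ} {B : ℝ}

lemma ae_mem_cube : ∀ᵐ x ∂muU d, x ∈ cube d :=
  ae_restrict_mem measurableSet_Icc

lemma integrable_expo (hε : 0 < ε) (hm : AEMeasurable m (muU d))
    (hB : ∀ x ∈ cube d, B ≤ m x) (θ : SymmL1 d) :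
    Integrable (fun x => Real.exp ((uFun θ x - m x) / ε)) (muU d) := by
  have hmeas : AEStronglyMeasurable (fun x => Real.exp ((uFun θ x - m x) / ε)) (muU d) :=
    (Real.measurable_exp.comp_aemeasurable
      (((continuous_uFun θ).aemeasurable.sub hm).div_const ε)).aestronglyMeasurable
  refine (integrable_const (Real.exp ((‖θ‖ - B) / ε))).mono' hmeas ?_
  filter_upwards [ae_mem_cube] with x hx
  rw [Real.norm_eq_abs, abs_of_pos (Real.exp_pos _), Real.exp_le_exp]
  gcongr
  · exact (abs_le.1 (abs_uFun_le θ x)).2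
  · exact hB x hx

lemma integrable_mul_expo (hε : 0 < ε) (hm : AEMeasurable m (muU d))
    (hB : ∀ x ∈ cube d, B ≤ m x) (θ : SymmL1 d)
    {g : (Fin d → ℝ) → ℝ} (hg : AEStronglyMeasurable g (muU d)) {C : ℝ}
    (hgC : ∀ x, |g x| ≤ C) :
    Integrable (fun x => g x * Real.exp ((uFun θ x - m x) / ε)) (muU d) :=
  (integrable_expo hε hm hB θ).bdd_mul hg (Filter.Eventually.of_forall fun x => by simpa [Real.norm_eq_abs] using hgC x)

lemma aesm_uFun_div (hε : 0 < ε) (τ : SymmL1 d) :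
    AEStronglyMeasurable (fun x => uFun τ x / ε) (muU d) :=
  ((continuous_uFun τ).div_const ε).aestronglyMeasurable

lemma abs_uFun_div_le (hε : 0 < ε) (τ : SymmL1 d) (x : Fin d → ℝ) :
    |uFun τ x / ε| ≤ ‖τ‖ / ε := by
  rw [abs_div, abs_of_pos hε]
  gcongr
  exact abs_uFun_le τ x

lemma integrable_uFun_mul_expo (hε : 0 < ε) (hm : AEMeasurable m (muU d))
    (hB : ∀ x ∈ cube d, B ≤ m x) (θ τ : SymmL1 d) :
    Integrable (fun x => (uFun τ x / ε) * Real.exp ((uFun θ x - m x) / ε)) (muU d) :=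
  integrable_mul_expo hε hm hB θ (aesm_uFun_div hε τ) (abs_uFun_div_le hε τ)

lemma Z_pos (hε : 0 < ε) (hm : AEMeasurable m (muU d))
    (hB : ∀ x ∈ cube d, B ≤ m x) (θ : SymmL1 d) :
    0 < ∫ x, Real.exp ((uFun θ x - m x) / ε) ∂muU d := by
  rw [integral_pos_iff_support_of_nonneg (fun x => (Real.exp_pos _).le)
    (integrable_expo hε hm hB θ)]
  have hsupp : Function.support (fun x => Real.exp ((uFun θ x - m x) / ε)) = Set.univ := by
    ext x
    simp [Function.support, (Real.exp_pos _).ne']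
  rw [hsupp]
  simp

/-- The candidate derivative of `Z` as a continuous linear map. -/
def Zprime (hε : 0 < ε) (hm : AEMeasurable m (muU d))
    (hB : ∀ x ∈ cube d, B ≤ m x) (θ : SymmL1 d) : SymmL1 d →L[ℝ] ℝ :=
  LinearMap.mkContinuous
    { toFun := fun τ => ∫ x, (uFun τ x / ε) * Real.exp ((uFun θ x - m x) / ε) ∂muU d
      map_add' := by
        intro τ₁ τ₂
        show ∫ x, (uFun (τ₁ + τ₂) x / ε) * Real.exp ((uFun θ x - m x) / ε) ∂muU d = _
        rw [← integral_add (integrable_uFun_mul_expo hε hm hB θ τ₁)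
          (integrable_uFun_mul_expo hε hm hB θ τ₂)]
        congr 1
        funext x
        rw [uFun_add]
        ring
      map_smul' := by
        intro r τ
        show ∫ x, (uFun (r • τ) x / ε) * Real.exp ((uFun θ x - m x) / ε) ∂muU d = _
        simp only [RingHom.id_apply, smul_eq_mul]
        rw [← integral_const_mul]
        congr 1
        funext x
        rw [uFun_smul]
        ring }
    ((∫ x, Real.exp ((uFun θ x - m x) / ε) ∂muU d) / ε)
    (by
      intro τ
      simp only [LinearMap.coe_mk, AddHom.coe_mk]
      rw [Real.norm_eq_abs]
      calc |∫ x, (uFun τ x / ε) * Real.exp ((uFun θ x - m x) / ε) ∂muU d|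
          ≤ ∫ x, ‖(uFun τ x / ε) * Real.exp ((uFun θ x - m x) / ε)‖ ∂muU d := by
            rw [← Real.norm_eq_abs]
            exact norm_integral_le_integral_norm _
        _ ≤ ∫ x, (‖τ‖ / ε) * Real.exp ((uFun θ x - m x) / ε) ∂muU d := by
            apply integral_mono_of_nonneg
            · filter_upwards with x
              positivity
            · exact (integrable_expo hε hm hB θ).const_mul _
            · filter_upwards with x
              rw [Real.norm_eq_abs, abs_mul, abs_of_pos (Real.exp_pos _), abs_div, abs_of_pos hε]
              gcongr
              exact abs_uFun_le τ x
        _ = (∫ x, Real.exp ((uFun θ x - m x) / ε) ∂muU d) / ε * ‖τ‖ := by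
            rw [integral_const_mul]
            ring)

lemma Zprime_apply (hε : 0 < ε) (hm : AEMeasurable m (muU d))
    (hB : ∀ x ∈ cube d, B ≤ m x) (θ τ : SymmL1 d) :
    Zprime hε hm hB θ τ = ∫ x, (uFun τ x / ε) * Real.exp ((uFun θ x - m x) / ε) ∂muU d := rfl

lemma hasFDerivAt_Z (hε : 0 < ε) (hm : AEMeasurable m (muU d))
    (hB : ∀ x ∈ cube d, B ≤ m x) (θ : SymmL1 d) :
    HasFDerivAt (fun θ' => ∫ x, Real.exp ((uFun θ' x - m x) / ε) ∂muU d)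
      (Zprime hε hm hB θ) θ := by
  have hZθ : 0 < ∫ x, Real.exp ((uFun θ x - m x) / ε) ∂muU d := Z_pos hε hm hB θ
  rw [hasFDerivAt_iff_isLittleO_nhds_zero, Asymptotics.isLittleO_iff]
  intro C hC
  have hkey : ∀ h : SymmL1 d, ‖h‖ ≤ ε →
      ‖(∫ x, Real.exp ((uFun (θ + h) x - m x) / ε) ∂muU d) -
        (∫ x, Real.exp ((uFun θ x - m x) / ε) ∂muU d) - Zprime hε hm hB θ h‖ ≤
      ((∫ x, Real.exp ((uFun θ x - m x) / ε) ∂muU d) / ε ^ 2) * ‖h‖ ^ 2 := by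
    intro h hh
    have hInt1 : Integrable (fun x => Real.exp ((uFun (θ + h) x - m x) / ε)) (muU d) :=
      integrable_expo hε hm hB (θ + h)
    have hInt2 : Integrable (fun x => Real.exp ((uFun θ x - m x) / ε)) (muU d) :=
      integrable_expo hε hm hB θ
    have hInt3 : Integrable
        (fun x => (uFun h x / ε) * Real.exp ((uFun θ x - m x) / ε)) (muU d) :=
      integrable_uFun_mul_expo hε hm hB θ h
    have hInt12 : Integrable (fun x => Real.exp ((uFun (θ + h) x - m x) / ε) -
        Real.exp ((uFun θ x - m x) / ε)) (muU d) := hInt1.sub hInt2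
    rw [Zprime_apply, ← integral_sub hInt1 hInt2, ← integral_sub hInt12 hInt3]
    have hptw : ∀ x, |Real.exp ((uFun (θ + h) x - m x) / ε) -
        Real.exp ((uFun θ x - m x) / ε) -
        (uFun h x / ε) * Real.exp ((uFun θ x - m x) / ε)|
        ≤ (‖h‖ / ε) ^ 2 * Real.exp ((uFun θ x - m x) / ε) := by
      intro x
      set a := (uFun θ x - m x) / ε with ha
      set t := uFun h x / ε with htt
      have he : (uFun (θ + h) x - m x) / ε = a + t := by
        rw [uFun_add, ha, htt]
        ring
      rw [he, Real.exp_add]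
      have ht1 : |t| ≤ ‖h‖ / ε := abs_uFun_div_le hε h x
      have ht2 : |t| ≤ 1 := ht1.trans (by rw [div_le_one hε]; exact hh)
      have hAB : Real.exp a * Real.exp t - Real.exp a - t * Real.exp a =
          Real.exp a * (Real.exp t - 1 - t) := by ring
      calc |Real.exp a * Real.exp t - Real.exp a - t * Real.exp a|
          = Real.exp a * |Real.exp t - 1 - t| := by
            rw [hAB, abs_mul, abs_of_pos (Real.exp_pos a)]
        _ ≤ Real.exp a * t ^ 2 := by
            gcongr
            exact Real.abs_exp_sub_one_sub_id_le ht2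
        _ ≤ (‖h‖ / ε) ^ 2 * Real.exp a := by
            rw [mul_comm]
            exact mul_le_mul_of_nonneg_right
              (sq_le_sq' (neg_le_of_abs_le ht1) (le_of_abs_le ht1)) (Real.exp_pos a).le
    calc ‖∫ x, (Real.exp ((uFun (θ + h) x - m x) / ε) -
            Real.exp ((uFun θ x - m x) / ε) -
            (uFun h x / ε) * Real.exp ((uFun θ x - m x) / ε)) ∂muU d‖
        ≤ ∫ x, ‖Real.exp ((uFun (θ + h) x - m x) / ε) -
            Real.exp ((uFun θ x - m x) / ε) -
            (uFun h x / ε) * Real.exp ((uFun θ x - m x) / ε)‖ ∂muU d :=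
          norm_integral_le_integral_norm _
      _ ≤ ∫ x, (‖h‖ / ε) ^ 2 * Real.exp ((uFun θ x - m x) / ε) ∂muU d := by
          apply integral_mono_of_nonneg
          · filter_upwards with x
            positivity
          · exact hInt2.const_mul _
          · filter_upwards with x
            rw [Real.norm_eq_abs]
            exact hptw x
      _ = ((∫ x, Real.exp ((uFun θ x - m x) / ε) ∂muU d) / ε ^ 2) * ‖h‖ ^ 2 := by
          rw [integral_const_mul]
          field_simp
  have hδpos : 0 < min ε (C * ε ^ 2 / (∫ x, Real.exp ((uFun θ x - m x) / ε) ∂muU d)) :=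
    lt_min hε (div_pos (by positivity) hZθ)
  rw [Metric.eventually_nhds_iff]
  refine ⟨min ε (C * ε ^ 2 / (∫ x, Real.exp ((uFun θ x - m x) / ε) ∂muU d)), hδpos,
    fun {h} hh => ?_⟩
  rw [dist_zero_right] at hh
  have hh1 : ‖h‖ ≤ ε := (hh.trans_le (min_le_left _ _)).le
  have hh2 : ‖h‖ ≤ C * ε ^ 2 / (∫ x, Real.exp ((uFun θ x - m x) / ε) ∂muU d) :=
    (hh.trans_le (min_le_right _ _)).le
  have hZnn : (0:ℝ) ≤ (∫ x, Real.exp ((uFun θ x - m x) / ε) ∂muU d) / ε ^ 2 :=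
    (div_pos hZθ (by positivity)).le
  have := hkey h hh1
  simp only [Real.norm_eq_abs] at this ⊢
  calc |(∫ x, Real.exp ((uFun (θ + h) x - m x) / ε) ∂muU d) -
        (∫ x, Real.exp ((uFun θ x - m x) / ε) ∂muU d) - Zprime hε hm hB θ h|
      ≤ ((∫ x, Real.exp ((uFun θ x - m x) / ε) ∂muU d) / ε ^ 2) * ‖h‖ ^ 2 := this
    _ = ((∫ x, Real.exp ((uFun θ x - m x) / ε) ∂muU d) / ε ^ 2) * ‖h‖ * ‖h‖ := by ring
    _ ≤ ((∫ x, Real.exp ((uFun θ x - m x) / ε) ∂muU d) / ε ^ 2) *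
        (C * ε ^ 2 / (∫ x, Real.exp ((uFun θ x - m x) / ε) ∂muU d)) * ‖h‖ := by
        gcongr
    _ = C * ‖h‖ := by
        field_simp

end Aux3

section Aux4

open scoped ENNReal NNReal

variable {d : ℕ}

lemma continuous_S (τ : SymmL1 d) :
    Continuous (fun x => ∑' l : Lam d, coeffL τ l * phiF l x) := by
  refine continuous_tsum (fun l => ?_) (summable_coeff τ) (fun l x => ?_)
  · exact continuous_const.mul (continuous_phiF l)
  · rw [norm_mul]; simp [abs_phiF]

lemma norm_S_le (τ : SymmL1 d) (x : Fin d → ℝ) :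
    ‖∑' l : Lam d, coeffL τ l * phiF l x‖ ≤ ‖τ‖ := by
  refine (norm_tsum_le_tsum_norm ?_).trans ?_
  · have : (fun l : Lam d => ‖coeffL τ l * phiF l x‖) = fun l => ‖coeffL τ l‖ := by
      funext l; rw [norm_mul]; simp [abs_phiF]
    rw [this]; exact summable_coeff τ
  · have : (fun l : Lam d => ‖coeffL τ l * phiF l x‖) = fun l => ‖coeffL τ l‖ := by
      funext l; rw [norm_mul]; simp [abs_phiF]
    rw [this, tsum_coeff_norm]

lemma tsum_formula {ε : ℝ} {c : (Fin d → ℝ) → (Fin d → ℝ) → ℝ} {θ : SymmL1 d}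
    {y : Fin d → ℝ} (hFint : Integrable (Fdens ε c θ y) (muU d)) (τ : SymmL1 d) :
    (∑' l : Lam d, starRingEnd ℂ (gradC ε c θ y l) * coeffL τ l).re =
      ∫ x, uFun τ x * Fdens ε c θ y x ∂muU d := by
  set F := Fdens ε c θ y with hFdef
  have hgl : ∀ l : Lam d, starRingEnd ℂ (gradC ε c θ y l) =
      ∫ x, phiF l x * (F x : ℂ) ∂muU d := by
    intro l
    rw [gradC, ← integral_conj]
    congr 1
    funext x
    rw [map_mul, Complex.conj_conj, Complex.conj_ofReal]
  have hφFint : ∀ l : Lam d, Integrable (fun x => phiF l x * (F x : ℂ)) (muU d) := by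
    intro l
    exact hFint.ofReal.bdd_mul (continuous_phiF l).aestronglyMeasurable
      (Filter.Eventually.of_forall fun x => by rw [abs_phiF])
  have hK : ∫⁻ x, ‖(F x : ℂ)‖ₑ ∂muU d < ⊤ := hFint.ofReal.hasFiniteIntegral
  have hswap : ∑' l : Lam d, starRingEnd ℂ (gradC ε c θ y l) * coeffL τ l =
      ∫ x, (∑' l : Lam d, coeffL τ l * (phiF l x * (F x : ℂ))) ∂muU d := by
    rw [integral_tsum (fun l => ((hφFint l).aestronglyMeasurable.const_mul _)) ?_]
    · refine tsum_congr fun l => ?_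
      rw [integral_const_mul, hgl l, mul_comm]
    · have hpt : ∀ l : Lam d, ∫⁻ x, ‖coeffL τ l * (phiF l x * (F x : ℂ))‖ₑ ∂muU d =
          ‖coeffL τ l‖ₑ * ∫⁻ x, ‖(F x : ℂ)‖ₑ ∂muU d := by
        intro l
        rw [← lintegral_const_mul' _ _ enorm_ne_top]
        congr 1
        funext x
        rw [enorm_mul, enorm_mul]
        have h1 : ‖phiF l x‖₊ = 1 := by
          ext
          rw [coe_nnnorm, abs_phiF]
          rfl
        have : ‖phiF l x‖ₑ = 1 := by simp [enorm_eq_nnnorm, h1]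
        rw [this]
        simp
      rw [funext hpt] at *
      rw [show ∑' l : Lam d, ‖coeffL τ l‖ₑ * ∫⁻ x, ‖(F x : ℂ)‖ₑ ∂muU d =
        (∑' l : Lam d, ‖coeffL τ l‖ₑ) * ∫⁻ x, ‖(F x : ℂ)‖ₑ ∂muU d from
        ENNReal.tsum_mul_right]
      refine ENNReal.mul_ne_top ?_ hK.ne
      exact tsum_enorm_ne_top_iff_summable_norm.2 (summable_coeff τ)
  rw [hswap]
  have hpt2 : (fun x => ∑' l : Lam d, coeffL τ l * (phiF l x * (F x : ℂ))) =
      fun x => (∑' l : Lam d, coeffL τ l * phiF l x) * (F x : ℂ) := by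
    funext x
    rw [← tsum_mul_right]
    exact tsum_congr fun l => by ring
  rw [hpt2]
  have hSFint : Integrable (fun x => (∑' l : Lam d, coeffL τ l * phiF l x) * (F x : ℂ))
      (muU d) :=
    hFint.ofReal.bdd_mul (continuous_S τ).aestronglyMeasurable (Filter.Eventually.of_forall (norm_S_le τ))
  rw [show (∫ x, (∑' l : Lam d, coeffL τ l * phiF l x) * (F x : ℂ) ∂muU d).re =
    RCLike.re (∫ x, (∑' l : Lam d, coeffL τ l * phiF l x) * (F x : ℂ) ∂muU d) from rfl,
    ← integral_re hSFint]
  congr 1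
  funext x
  simp only [RCLike.re_to_complex, Complex.mul_re, Complex.ofReal_re, Complex.ofReal_im,
    mul_zero, sub_zero]
  rfl

end Aux4

/-- Proposition: first Fréchet derivative of `h_ε(·,y)`.
For every `y ∈ 𝒴` and every `θ ∈ ℓ̄₁(Λ)`, the map `θ ↦ h_ε(θ,y)` is Fréchet
differentiable at `θ`, with derivative `τ ↦ Σ_λ conj(g_λ(θ,y)) τ_λ`, whose operator
norm is bounded by `sup_λ |g_λ(θ,y)| ≤ 1`. -/
theorem statement0
    (d : ℕ) (hd : 0 < d) (ε : ℝ) (hε : 0 < ε)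
    (Y : Set (Fin d → ℝ)) (ν : Measure (Fin d → ℝ)) [IsProbabilityMeasure ν]
    (hνY : ν Yᶜ = 0)
    (c : (Fin d → ℝ) → (Fin d → ℝ) → ℝ)
    (hc_lsc : LowerSemicontinuousOn (fun p : (Fin d → ℝ) × (Fin d → ℝ) => c p.1 p.2)
      (cube d ×ˢ Y))
    (hc_int : Integrable (fun p : (Fin d → ℝ) × (Fin d → ℝ) => c p.1 p.2) ((muU d).prod ν)) :
    ∀ y ∈ Y, ∀ θ : SymmL1 d,
      ∃ D : SymmL1 d →L[ℝ] ℝ,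
        HasFDerivAt (fun θ' => hEps ε c θ' y) D θ ∧
        (∀ τ : SymmL1 d,
          D τ = (∑' l : Lam d, starRingEnd ℂ (gradC ε c θ y l) * coeffL τ l).re) ∧
        ‖D‖ ≤ (⨆ l : Lam d, ‖gradC ε c θ y l‖) ∧
        (⨆ l : Lam d, ‖gradC ε c θ y l‖) ≤ 1 := by
  intro y hy θ
  haveI hne : Nonempty (Lam d) := ⟨⟨fun _ => 1, fun h => by
    have := congrFun h ⟨0, hd⟩
    simp at this⟩⟩
  have hlsc : LowerSemicontinuousOn (fun x => c x y) (cube d) := lsc_slice hc_lsc hy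
  have hm : AEMeasurable (fun x => c x y) (muU d) := lsc_aemeasurable hlsc
  obtain ⟨B, hB⟩ := lsc_bddBelow hlsc
  have hZpos : 0 < ∫ x, Real.exp ((uFun θ x - c x y) / ε) ∂muU d := Z_pos hε hm hB θ
  have hEint : Integrable (fun x => Real.exp ((uFun θ x - c x y) / ε)) (muU d) :=
    integrable_expo hε hm hB θ
  have hFint : Integrable (Fdens ε c θ y) (muU d) := hEint.div_const _
  have hFnn : ∀ x, 0 ≤ Fdens ε c θ y x := fun x =>
    div_nonneg (Real.exp_pos _).le hZpos.le
  have hFone : ∫ x, Fdens ε c θ y x ∂muU d = 1 := by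
    rw [show Fdens ε c θ y = fun x => Real.exp ((uFun θ x - c x y) / ε) /
      (∫ x', Real.exp ((uFun θ x' - c x' y) / ε) ∂muU d) from rfl]
    rw [integral_div]
    exact div_self hZpos.ne'
  -- the derivative via the chain rule
  have hZ : HasFDerivAt (fun θ' => ∫ x, Real.exp ((uFun θ' x - c x y) / ε) ∂muU d)
      (Zprime hε hm hB θ) θ := hasFDerivAt_Z hε hm hB θ
  have hlog : HasDerivAt Real.log (∫ x, Real.exp ((uFun θ x - c x y) / ε) ∂muU d)⁻¹
      (∫ x, Real.exp ((uFun θ x - c x y) / ε) ∂muU d) := Real.hasDerivAt_log hZpos.ne'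
  have h1 : HasFDerivAt
      (fun θ' => Real.log (∫ x, Real.exp ((uFun θ' x - c x y) / ε) ∂muU d))
      ((∫ x, Real.exp ((uFun θ x - c x y) / ε) ∂muU d)⁻¹ • Zprime hε hm hB θ) θ :=
    by have := hlog.comp_hasFDerivAt θ hZ; exact this
  have h2 := (h1.const_mul ε).add_const ε
  have hD : ∀ τ : SymmL1 d,
      (ε • ((∫ x, Real.exp ((uFun θ x - c x y) / ε) ∂muU d)⁻¹ • Zprime hε hm hB θ)) τ =
      ∫ x, uFun τ x * Fdens ε c θ y x ∂muU d := by
    intro τ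
    simp only [ContinuousLinearMap.smul_apply, smul_eq_mul, Zprime_apply]
    rw [show (fun x => uFun τ x * Fdens ε c θ y x) =
      fun x => (ε * (∫ x', Real.exp ((uFun θ x' - c x' y) / ε) ∂muU d)⁻¹) *
        ((uFun τ x / ε) * Real.exp ((uFun θ x - c x y) / ε)) from ?_, integral_const_mul]
    · ring
    · funext x
      rw [show Fdens ε c θ y x = Real.exp ((uFun θ x - c x y) / ε) /
        (∫ x', Real.exp ((uFun θ x' - c x' y) / ε) ∂muU d) from rfl]
      field_simp
  have hform : ∀ τ : SymmL1 d,
      (ε • ((∫ x, Real.exp ((uFun θ x - c x y) / ε) ∂muU d)⁻¹ • Zprime hε hm hB θ)) τ =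
      (∑' l : Lam d, starRingEnd ℂ (gradC ε c θ y l) * coeffL τ l).re := by
    intro τ
    rw [hD τ]
    exact (tsum_formula hFint τ).symm
  have hg1 : ∀ l : Lam d, ‖gradC ε c θ y l‖ ≤ 1 := by
    intro l
    rw [gradC]
    calc ‖∫ x, starRingEnd ℂ (phiF l x) * (Fdens ε c θ y x : ℂ) ∂muU d‖
        ≤ ∫ x, ‖starRingEnd ℂ (phiF l x) * (Fdens ε c θ y x : ℂ)‖ ∂muU d := by
          exact norm_integral_le_integral_norm _
      _ = ∫ x, Fdens ε c θ y x ∂muU d := by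
          congr 1
          funext x
          rw [norm_mul, Complex.norm_conj, abs_phiF, one_mul,
            Complex.norm_real, Real.norm_eq_abs, _root_.abs_of_nonneg (hFnn x)]
      _ = 1 := hFone
  have hbdd : BddAbove (Set.range fun l : Lam d => ‖gradC ε c θ y l‖) :=
    ⟨1, by rintro _ ⟨l, rfl⟩; exact hg1 l⟩
  have hsup_nn : 0 ≤ ⨆ l : Lam d, ‖gradC ε c θ y l‖ :=
    le_trans (norm_nonneg _) (le_ciSup hbdd (Classical.arbitrary _))
  refine ⟨ε • ((∫ x, Real.exp ((uFun θ x - c x y) / ε) ∂muU d)⁻¹ • Zprime hε hm hB θ),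
    h2, hform, ?_, ciSup_le hg1⟩
  refine ContinuousLinearMap.opNorm_le_bound _ hsup_nn fun τ => ?_
  rw [Real.norm_eq_abs, hform τ]
  have hs1 : Summable (fun l : Lam d => ‖starRingEnd ℂ (gradC ε c θ y l) * coeffL τ l‖) := by
    refine Summable.of_nonneg_of_le (fun l => norm_nonneg _) (fun l => ?_) (summable_coeff τ)
    rw [norm_mul, Complex.norm_conj]
    calc ‖gradC ε c θ y l‖ * ‖coeffL τ l‖
        ≤ 1 * ‖coeffL τ l‖ := mul_le_mul_of_nonneg_right (hg1 l) (norm_nonneg _)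
      _ = ‖coeffL τ l‖ := one_mul _
  calc |(∑' l : Lam d, starRingEnd ℂ (gradC ε c θ y l) * coeffL τ l).re|
      ≤ ‖∑' l : Lam d, starRingEnd ℂ (gradC ε c θ y l) * coeffL τ l‖ :=
        Complex.abs_re_le_norm _
    _ ≤ ∑' l : Lam d, ‖starRingEnd ℂ (gradC ε c θ y l) * coeffL τ l‖ := by
        exact norm_tsum_le_tsum_norm hs1
    _ ≤ ∑' l : Lam d, (⨆ l' : Lam d, ‖gradC ε c θ y l'‖) * ‖coeffL τ l‖ := by
        refine Summable.tsum_le_tsum (fun l => ?_) hs1 ((summable_coeff τ).mul_left _)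
        rw [norm_mul, Complex.norm_conj]
        exact mul_le_mul_of_nonneg_right (le_ciSup hbdd l) (norm_nonneg _)
    _ = (⨆ l' : Lam d, ‖gradC ε c θ y l'‖) * ‖τ‖ := by
        rw [tsum_mul_left, tsum_coeff_norm]

end
end

section
/- Let φ : [0,1] → ℝ be three times continuously differentiable with φ''(t) ≥ 0 for all t ∈ [0,1], and let δ > 0 be such that |φ'''(t)| ≤ δ φ''(t) for all t ∈ [0,1]. Then φ''(t) ≥ e^{−δt} φ''(0) for all t ∈ [0,1], and consequently φ'(1) − φ'(0) ≥ ((1 − e^{−δ})/δ) φ''(0). -/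
open Real Set

/-- Grönwall-type consequence of a self-concordance inequality.
If `φ : [0,1] → ℝ` is three times continuously differentiable with `φ'' ≥ 0` on
`[0,1]` and `|φ'''(t)| ≤ δ φ''(t)` on `[0,1]` for some `δ > 0`, then
`φ''(t) ≥ e^{−δt} φ''(0)` on `[0,1]`, and `φ'(1) − φ'(0) ≥ ((1 − e^{−δ})/δ) φ''(0)`. -/
theorem statement14 (φ p1 p2 p3 : ℝ → ℝ)
    (hder : ∀ t ∈ Icc (0 : ℝ) 1,
      HasDerivAt φ (p1 t) t ∧ HasDerivAt p1 (p2 t) t ∧ HasDerivAt p2 (p3 t) t)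
    (hcont : ContinuousOn p3 (Icc (0 : ℝ) 1))
    (hconv : ∀ t ∈ Icc (0 : ℝ) 1, 0 ≤ p2 t)
    (δ : ℝ) (hδ : 0 < δ)
    (hsc : ∀ t ∈ Icc (0 : ℝ) 1, |p3 t| ≤ δ * p2 t) :
    (∀ t ∈ Icc (0 : ℝ) 1, p2 t ≥ Real.exp (-δ * t) * p2 0) ∧
    p1 1 - p1 0 ≥ ((1 - Real.exp (-δ)) / δ) * p2 0 := by
  have hp2cont : ContinuousOn p2 (Icc (0:ℝ) 1) := fun t ht =>
    ((hder t ht).2.2).continuousAt.continuousWithinAt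
  set g : ℝ → ℝ := fun t => Real.exp (δ * t) * p2 t with hg
  have hgder : ∀ t ∈ Icc (0:ℝ) 1,
      HasDerivAt g (Real.exp (δ * t) * (δ * p2 t + p3 t)) t := by
    intro t ht
    have h1 : HasDerivAt (fun t => Real.exp (δ * t)) (δ * Real.exp (δ * t)) t := by
      have := (Real.hasDerivAt_exp (δ * t)).comp t ((hasDerivAt_id t).const_mul δ)
      exact this.congr_deriv (by ring)
    have := h1.mul (hder t ht).2.2
    exact this.congr_deriv (by ring)
  have hmono : MonotoneOn g (Icc (0:ℝ) 1) := by
    apply monotoneOn_of_deriv_nonneg (convex_Icc 0 1)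
    · exact (Real.continuous_exp.comp (continuous_const.mul continuous_id)).continuousOn.mul hp2cont
    · intro x hx
      rw [interior_Icc] at hx
      exact ((hgder x (Ioo_subset_Icc_self hx)).differentiableAt).differentiableWithinAt
    · intro x hx
      rw [interior_Icc] at hx
      have hx' := Ioo_subset_Icc_self hx
      rw [(hgder x hx').deriv]
      have h3 := hsc x hx'
      have : 0 ≤ δ * p2 x + p3 x := by
        have := (abs_le.mp h3).1
        linarith
      positivity
  have hpart1 : ∀ t ∈ Icc (0:ℝ) 1, p2 t ≥ Real.exp (-δ * t) * p2 0 := by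
    intro t ht
    have h0 : (0:ℝ) ∈ Icc (0:ℝ) 1 := by constructor <;> norm_num
    have := hmono h0 ht ht.1
    simp only [hg, mul_zero, Real.exp_zero, one_mul] at this
    have hpos : 0 < Real.exp (δ * t) := Real.exp_pos _
    rw [ge_iff_le, neg_mul, Real.exp_neg, inv_mul_le_iff₀ hpos]
    exact this
  refine ⟨hpart1, ?_⟩
  -- FTC for p1
  have hFTC : ∫ t in (0:ℝ)..1, p2 t = p1 1 - p1 0 := by
    apply intervalIntegral.integral_eq_sub_of_hasDerivAt
    · intro t ht
      rw [Set.uIcc_of_le (by norm_num : (0:ℝ) ≤ 1)] at ht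
      exact (hder t ht).2.1
    · exact (hp2cont.mono (by rw [Set.uIcc_of_le (by norm_num : (0:ℝ) ≤ 1)])).intervalIntegrable
  have hexp_int : ∫ t in (0:ℝ)..1, Real.exp (-δ * t) = (1 - Real.exp (-δ)) / δ := by
    have hF : ∀ t : ℝ, HasDerivAt (fun t => -(1/δ) * Real.exp (-δ * t)) (Real.exp (-δ * t)) t := by
      intro t
      have h0 : HasDerivAt (fun t : ℝ => -δ * t) (-δ) t := by
        simpa using (hasDerivAt_id t).const_mul (-δ)
      have h1 : HasDerivAt (fun t => Real.exp (-δ * t)) (Real.exp (-δ * t) * (-δ)) t :=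
        (Real.hasDerivAt_exp (-δ * t)).comp t h0
      have := h1.const_mul (-(1/δ))
      exact this.congr_deriv (by field_simp)
    have := intervalIntegral.integral_eq_sub_of_hasDerivAt (a := (0:ℝ)) (b := 1) (fun t _ => hF t)
      ((Real.continuous_exp.comp (continuous_const.mul continuous_id)).continuousOn.intervalIntegrable)
    rw [this]
    field_simp
    simp
    ring
  have hmono_int : ∫ t in (0:ℝ)..1, Real.exp (-δ * t) * p2 0 ≤ ∫ t in (0:ℝ)..1, p2 t := by
    apply intervalIntegral.integral_mono_on (by norm_num)
    · exact (((Real.continuous_exp.comp (continuous_const.mul continuous_id)).mul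
        continuous_const).continuousOn).intervalIntegrable
    · exact (hp2cont.mono (by rw [Set.uIcc_of_le (by norm_num : (0:ℝ) ≤ 1)])).intervalIntegrable
    · intro x hx
      exact hpart1 x hx
  rw [ge_iff_le, ← hFTC]
  calc ((1 - Real.exp (-δ)) / δ) * p2 0
      = ∫ t in (0:ℝ)..1, Real.exp (-δ * t) * p2 0 := by
        rw [intervalIntegral.integral_mul_const, hexp_int]
    _ ≤ ∫ t in (0:ℝ)..1, p2 t := hmono_int
end
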